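/- Exponential moment of a product of sub-Gaussian variables: let X be sub-Gaussian with variance parameter σ₁² and Y be sub-Gaussian with variance parameter σ₂² (defined on the same probability space, not necessarily independent). Then for all γ with 0 ≤ γ < 1/(4σ₁σ₂), one has E[exp(γXY)] ≤ 3. -/

import Mathlib

open MeasureTheory

noncomputable section

/-- `X` is sub-Gaussian with variance parameter `σ²`:
`log E[exp(tX)] ≤ σ² t²/2` for all `t ∈ ℝ` (in particular all exponential
moments are finite). -/
def SubGaussianPar {Ω : Type*} [MeasurableSpace Ω] (μ : Measure Ω) (X : Ω → ℝ)
    (σ2 : ℝ) : Prop :=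
  ∀ t : ℝ, Integrable (fun ω => Real.exp (t * X ω)) μ ∧
    ∫ ω, Real.exp (t * X ω) ∂μ ≤ Real.exp (σ2 * t ^ 2 / 2)

open Real ENNReal

/-- Gaussian integral with a linear term: `∫ exp(-b s² + x s) = √(π/b) exp(x²/(4b))`. -/
lemma gauss_int {b : ℝ} (hb : 0 < b) (x : ℝ) :
    Integrable (fun s => Real.exp (-b * s ^ 2 + x * s)) ∧
    ∫ s : ℝ, Real.exp (-b * s ^ 2 + x * s) = Real.sqrt (π / b) * Real.exp (x ^ 2 / (4 * b)) := by
  have key : ∀ s : ℝ, -b * s ^ 2 + x * s = x ^ 2 / (4 * b) + (-b * (s - x / (2 * b)) ^ 2) := by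
    intro s; field_simp; ring
  have h1 : (fun s : ℝ => Real.exp (-b * s ^ 2 + x * s)) =
      fun s => Real.exp (x ^ 2 / (4 * b)) * Real.exp (-b * (s - x / (2 * b)) ^ 2) := by
    funext s; rw [key s, Real.exp_add]
  constructor
  · rw [h1]
    exact (((integrable_exp_neg_mul_sq hb).comp_sub_right (x / (2 * b)))).const_mul _
  · rw [h1]
    rw [MeasureTheory.integral_const_mul]
    have := integral_sub_right_eq_self (μ := volume) (fun s : ℝ => Real.exp (-b * s ^ 2)) (x / (2 * b))
    rw [this, integral_gaussian, mul_comm]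

/-- Exponential square-moment bound for sub-Gaussian variables. -/
lemma sq_bound {Ω : Type*} [MeasurableSpace Ω] (μ : Measure Ω) [IsProbabilityMeasure μ]
    (X : Ω → ℝ) (hXm : Measurable X) (σ : ℝ) (hσ : 0 < σ)
    (hX : SubGaussianPar μ X (σ ^ 2)) (c : ℝ) (hc : 0 < c) (hcσ : 2 * c * σ ^ 2 ≤ 1 / 2) :
    ∫⁻ ω, ENNReal.ofReal (Real.exp (c * X ω ^ 2)) ∂μ ≤ 2 := by
  set b : ℝ := 1 / (4 * c) with hb_def
  have hb : 0 < b := by positivity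
  have hσb : σ ^ 2 / 2 < b := by
    rw [hb_def]
    rw [div_lt_div_iff₀ (by norm_num) (by positivity)] at *
    nlinarith
  set b' : ℝ := b - σ ^ 2 / 2 with hb'_def
  have hb' : 0 < b' := by simp [hb'_def]; linarith
  have hsqrt : 0 < Real.sqrt (π / b) := Real.sqrt_pos.mpr (by positivity)
  have hpt : ∀ ω, ENNReal.ofReal (Real.exp (c * X ω ^ 2)) =
      ENNReal.ofReal (Real.sqrt (π / b))⁻¹ *
        ∫⁻ s : ℝ, ENNReal.ofReal (Real.exp (-b * s ^ 2 + X ω * s)) := by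
    intro ω
    have hint := (gauss_int hb (X ω))
    rw [← ofReal_integral_eq_lintegral_ofReal hint.1
      (Filter.Eventually.of_forall fun s => (Real.exp_pos _).le), hint.2,
      ← ENNReal.ofReal_mul (by positivity)]
    congr 1
    rw [← mul_assoc, inv_mul_cancel₀ hsqrt.ne', one_mul]
    congr 1
    rw [hb_def]
    field_simp
  calc ∫⁻ ω, ENNReal.ofReal (Real.exp (c * X ω ^ 2)) ∂μ
      = ENNReal.ofReal (Real.sqrt (π / b))⁻¹ *
        ∫⁻ ω, ∫⁻ s : ℝ, ENNReal.ofReal (Real.exp (-b * s ^ 2 + X ω * s)) ∂volume ∂μ := by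
        simp_rw [hpt]
        rw [lintegral_const_mul' _ _ ENNReal.ofReal_ne_top]
    _ = ENNReal.ofReal (Real.sqrt (π / b))⁻¹ *
        ∫⁻ s : ℝ, ∫⁻ ω, ENNReal.ofReal (Real.exp (-b * s ^ 2 + X ω * s)) ∂μ ∂volume := by
        congr 1
        refine lintegral_lintegral_swap ?_
        apply Measurable.aemeasurable
        apply Measurable.ennreal_ofReal
        exact (((measurable_const.mul ((measurable_snd).pow_const 2)).add
          ((hXm.comp measurable_fst).mul measurable_snd)).exp)
    _ ≤ ENNReal.ofReal (Real.sqrt (π / b))⁻¹ *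
        ∫⁻ s : ℝ, ENNReal.ofReal (Real.exp (-b' * s ^ 2)) ∂volume := by
        gcongr with s
        have hsplit : ∀ ω, Real.exp (-b * s ^ 2 + X ω * s)
            = Real.exp (-b * s ^ 2) * Real.exp (s * X ω) := by
          intro ω; rw [← Real.exp_add]; ring_nf
        simp_rw [hsplit]
        calc ∫⁻ ω, ENNReal.ofReal (Real.exp (-b * s ^ 2) * Real.exp (s * X ω)) ∂μ
            = ENNReal.ofReal (Real.exp (-b * s ^ 2)) *
              ∫⁻ ω, ENNReal.ofReal (Real.exp (s * X ω)) ∂μ := by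
              simp_rw [ENNReal.ofReal_mul (Real.exp_pos _).le]
              rw [lintegral_const_mul' _ _ ENNReal.ofReal_ne_top]
          _ ≤ ENNReal.ofReal (Real.exp (-b * s ^ 2)) *
              ENNReal.ofReal (Real.exp (σ ^ 2 * s ^ 2 / 2)) := by
              gcongr
              rw [← ofReal_integral_eq_lintegral_ofReal (hX s).1
                (Filter.Eventually.of_forall fun ω => (Real.exp_pos _).le)]
              exact ENNReal.ofReal_le_ofReal (hX s).2
          _ = ENNReal.ofReal (Real.exp (-b' * s ^ 2)) := by
              rw [← ENNReal.ofReal_mul (Real.exp_pos _).le, ← Real.exp_add]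
              congr 2
              rw [hb'_def]; ring
    _ = ENNReal.ofReal (Real.sqrt (π / b))⁻¹ * ENNReal.ofReal (Real.sqrt (π / b')) := by
        rw [← ofReal_integral_eq_lintegral_ofReal (integrable_exp_neg_mul_sq hb')
          (Filter.Eventually.of_forall fun s => (Real.exp_pos _).le), integral_gaussian]
    _ ≤ 2 := by
        rw [← ENNReal.ofReal_mul (by positivity)]
        have h2 : (2 : ℝ≥0∞) = ENNReal.ofReal 2 := by norm_num
        rw [h2]
        apply ENNReal.ofReal_le_ofReal
        rw [inv_mul_le_iff₀ hsqrt]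
        have hbb : b ≤ 4 * b' := by
          have hσ2 : σ ^ 2 ≤ 1 / (4 * c) := by
            rw [le_div_iff₀ (by positivity)]; nlinarith
          rw [hb'_def, hb_def]; linarith
        have : π / b' ≤ 4 * (π / b) := by
          rw [show (4:ℝ) * (π / b) = (4 * π) / b by ring, div_le_div_iff₀ hb' hb]
          nlinarith [mul_le_mul_of_nonneg_left hbb pi_pos.le]
        calc Real.sqrt (π / b') ≤ Real.sqrt (4 * (π / b)) := Real.sqrt_le_sqrt this
          _ = 2 * Real.sqrt (π / b) := by
              rw [show (4 : ℝ) * (π / b) = 2 ^ 2 * (π / b) by norm_num, Real.sqrt_mul (by positivity),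
                Real.sqrt_sq (by norm_num)]
          _ = Real.sqrt (π / b) * 2 := mul_comm _ _

/-- exponential moment of a product of sub-Gaussian random variables:
if `X ∈ G(σ₁²)` and `Y ∈ G(σ₂²)`, then `E[exp(γXY)] ≤ 3` for all `0 ≤ γ < 1/(4σ₁σ₂)`. -/
theorem stmt16
    {Ω : Type*} [MeasurableSpace Ω] (μ : Measure Ω) [IsProbabilityMeasure μ]
    (X Y : Ω → ℝ) (hXm : Measurable X) (hYm : Measurable Y)
    (σ1 σ2 : ℝ) (hσ1 : 0 < σ1) (hσ2 : 0 < σ2)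
    (hX : SubGaussianPar μ X (σ1 ^ 2)) (hY : SubGaussianPar μ Y (σ2 ^ 2))
    (γ : ℝ) (hγ0 : 0 ≤ γ) (hγ : γ < 1 / (4 * σ1 * σ2)) :
    Integrable (fun ω => Real.exp (γ * X ω * Y ω)) μ ∧
    ∫ ω, Real.exp (γ * X ω * Y ω) ∂μ ≤ 3 := by
  rcases eq_or_lt_of_le hγ0 with rfl | hγpos
  · simp only [zero_mul, Real.exp_zero]
    refine ⟨integrable_const (1 : ℝ), ?_⟩
    simp
  set c1 : ℝ := γ * σ2 / σ1 with hc1_def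
  set c2 : ℝ := γ * σ1 / σ2 with hc2_def
  have hc1 : 0 < c1 := by positivity
  have hc2 : 0 < c2 := by positivity
  have hγσ : 2 * γ * (σ1 * σ2) ≤ 1 / 2 := by
    rw [lt_div_iff₀ (by positivity)] at hγ
    nlinarith
  have hc1σ : 2 * c1 * σ1 ^ 2 ≤ 1 / 2 := by
    rw [hc1_def, show 2 * (γ * σ2 / σ1) * σ1 ^ 2 = 2 * γ * (σ1 * σ2) by field_simp]
    exact hγσ
  have hc2σ : 2 * c2 * σ2 ^ 2 ≤ 1 / 2 := by
    rw [hc2_def, show 2 * (γ * σ1 / σ2) * σ2 ^ 2 = 2 * γ * (σ1 * σ2) by field_simp]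
    exact hγσ
  have hpt : ∀ ω, Real.exp (γ * X ω * Y ω) ≤
      Real.exp (c1 * X ω ^ 2 / 2) * Real.exp (c2 * Y ω ^ 2 / 2) := by
    intro ω
    rw [← Real.exp_add]
    apply Real.exp_le_exp.mpr
    have key : c1 * X ω ^ 2 / 2 + c2 * Y ω ^ 2 / 2 - γ * X ω * Y ω
        = γ / (2 * σ1 * σ2) * (σ2 * X ω - σ1 * Y ω) ^ 2 := by
      rw [hc1_def, hc2_def]; field_simp; ring
    nlinarith [mul_nonneg (by positivity : (0:ℝ) ≤ γ / (2 * σ1 * σ2))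
      (sq_nonneg (σ2 * X ω - σ1 * Y ω))]
  have hm1 : Measurable fun ω => ENNReal.ofReal (Real.exp (c1 * X ω ^ 2 / 2)) :=
    (((measurable_const.mul (hXm.pow_const 2)).div_const 2).exp).ennreal_ofReal
  have hm2 : Measurable fun ω => ENNReal.ofReal (Real.exp (c2 * Y ω ^ 2 / 2)) :=
    (((measurable_const.mul (hYm.pow_const 2)).div_const 2).exp).ennreal_ofReal
  have hrp1 : ∀ ω, ENNReal.ofReal (Real.exp (c1 * X ω ^ 2 / 2)) ^ (2:ℝ)
      = ENNReal.ofReal (Real.exp (c1 * X ω ^ 2)) := by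
    intro ω
    rw [ENNReal.ofReal_rpow_of_pos (Real.exp_pos _), ← Real.exp_mul]
    norm_num
  have hrp2 : ∀ ω, ENNReal.ofReal (Real.exp (c2 * Y ω ^ 2 / 2)) ^ (2:ℝ)
      = ENNReal.ofReal (Real.exp (c2 * Y ω ^ 2)) := by
    intro ω
    rw [ENNReal.ofReal_rpow_of_pos (Real.exp_pos _), ← Real.exp_mul]
    norm_num
  have hgood : ∫⁻ ω, ENNReal.ofReal (Real.exp (γ * X ω * Y ω)) ∂μ ≤ 2 := by
    calc ∫⁻ ω, ENNReal.ofReal (Real.exp (γ * X ω * Y ω)) ∂μ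
        ≤ ∫⁻ ω, ENNReal.ofReal (Real.exp (c1 * X ω ^ 2 / 2)) *
            ENNReal.ofReal (Real.exp (c2 * Y ω ^ 2 / 2)) ∂μ := by
          apply lintegral_mono
          intro ω
          dsimp only
          rw [← ENNReal.ofReal_mul (Real.exp_pos _).le]
          exact ENNReal.ofReal_le_ofReal (hpt ω)
      _ ≤ (∫⁻ ω, ENNReal.ofReal (Real.exp (c1 * X ω ^ 2 / 2)) ^ (2:ℝ) ∂μ) ^ (1/2:ℝ) *
          (∫⁻ ω, ENNReal.ofReal (Real.exp (c2 * Y ω ^ 2 / 2)) ^ (2:ℝ) ∂μ) ^ (1/2:ℝ) :=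
          ENNReal.lintegral_mul_le_Lp_mul_Lq μ ⟨by norm_num, by norm_num, by norm_num⟩
            hm1.aemeasurable hm2.aemeasurable
      _ ≤ (2:ℝ≥0∞) ^ (1/2:ℝ) * (2:ℝ≥0∞) ^ (1/2:ℝ) := by
          gcongr
          · simp_rw [hrp1]
            exact sq_bound μ X hXm σ1 hσ1 hX c1 hc1 hc1σ
          · simp_rw [hrp2]
            exact sq_bound μ Y hYm σ2 hσ2 hY c2 hc2 hc2σ
      _ = 2 := by
          rw [← ENNReal.rpow_add _ _ (by norm_num) (by norm_num)]
          norm_num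
  have hmexp : Measurable fun ω => Real.exp (γ * X ω * Y ω) :=
    (((measurable_const.mul hXm).mul hYm)).exp
  have hnn : 0 ≤ᵐ[μ] fun ω => Real.exp (γ * X ω * Y ω) :=
    Filter.Eventually.of_forall fun ω => (Real.exp_pos _).le
  constructor
  · refine ⟨hmexp.aestronglyMeasurable, ?_⟩
    rw [hasFiniteIntegral_iff_ofReal hnn]
    exact lt_of_le_of_lt hgood (by norm_num)
  · rw [integral_eq_lintegral_of_nonneg_ae hnn hmexp.aestronglyMeasurable]
    refine ENNReal.toReal_le_of_le_ofReal (by norm_num) (hgood.trans ?_)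
    rw [show ENNReal.ofReal 3 = (3:ℝ≥0∞) by norm_num]
    norm_num

end
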